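/- For i ≠ j, a ≠ b, and k1, k2 ≥ 1, the elements Q^{2k}_{ij} = (E_{i,j} − E_{j,i}) ⊗ λ̄^{k−1}·λ̄i·λ̄j of so(n,1) ⊗ Q satisfy [Q^{2k1}_{ij}, Q^{2k2}_{ab}] = δ_{aj}·Q^{2(k1+k2)}_{ib} − δ_{ib}·Q^{2(k1+k2)}_{aj} + δ_{jb}·Q^{2(k1+k2)}_{ai} − δ_{ia}·Q^{2(k1+k2)}_{jb} + ri·δ_{ib}·Q^{2(k1+k2−1)}_{aj} − rj·δ_{aj}·Q^{2(k1+k2−1)}_{ib} + ri·δ_{ia}·Q^{2(k1+k2−1)}_{jb} − rj·δ_{jb}·Q^{2(k1+k2−1)}_{ai}. -/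

import Mathlib

open MvPolynomial Matrix

noncomputable section

/-- The ideal generated by the polynomials `λᵢ² − λⱼ² + rᵢ − rⱼ`. -/
def LLIdeal (n : ℕ) (r : Fin n → ℂ) : Ideal (MvPolynomial (Fin n) ℂ) :=
  Ideal.span {p | ∃ i j : Fin n, p = X i ^ 2 - X j ^ 2 + C (r i) - C (r j)}

/-- The algebra `Q` of polynomial functions on the curve. -/
abbrev LLQ (n : ℕ) (r : Fin n → ℂ) : Type := MvPolynomial (Fin n) ℂ ⧸ LLIdeal n r

/-- `λ̄ᵢ`, the image of `λᵢ` in `Q`. -/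
def lamQ (n : ℕ) (r : Fin n → ℂ) (i : Fin n) : LLQ n r :=
  Ideal.Quotient.mk _ (X i)

/-- `λ̄ = λ̄ᵢ² + rᵢ` (independent of `i`). -/
def lambar (n : ℕ) (r : Fin n → ℂ) [NeZero n] : LLQ n r :=
  lamQ n r 0 ^ 2 + algebraMap ℂ _ (r 0)

/-- Matrices of size `n+1` over `Q`; contains `so(n,1) ⊗ Q` with its commutator
Lie bracket. -/
abbrev LLM (n : ℕ) (r : Fin n → ℂ) : Type := Matrix (Fin (n+1)) (Fin (n+1)) (LLQ n r)

/-- `Q_i = (E_{i,n+1} + E_{n+1,i}) ⊗ λ̄ᵢ`. -/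
def Qgen (n : ℕ) (r : Fin n → ℂ) (i : Fin n) : LLM n r :=
  lamQ n r i • (Matrix.single i.castSucc (Fin.last n) 1 + Matrix.single (Fin.last n) i.castSucc 1)

/-- `Q^{2k-1}_l = (E_{l,n+1} + E_{n+1,l}) ⊗ λ̄^{k-1} λ̄_l`. -/
def Qodd (n : ℕ) (r : Fin n → ℂ) [NeZero n] (k : ℕ) (l : Fin n) : LLM n r :=
  (lambar n r ^ (k-1) * lamQ n r l) •
    (Matrix.single l.castSucc (Fin.last n) 1 + Matrix.single (Fin.last n) l.castSucc 1)

/-- `Q^{2k}_{ij} = (E_{i,j} − E_{j,i}) ⊗ λ̄^{k-1} λ̄ᵢ λ̄ⱼ`. -/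
def Qeven (n : ℕ) (r : Fin n → ℂ) [NeZero n] (k : ℕ) (i j : Fin n) : LLM n r :=
  (lambar n r ^ (k-1) * lamQ n r i * lamQ n r j) •
    (Matrix.single i.castSucc j.castSucc 1 - Matrix.single j.castSucc i.castSucc 1)

end

/-- Kronecker delta valued in . -/
noncomputable def kdelta {n : ℕ} (a b : Fin n) : ℂ := if a = b then 1 else 0


set_option synthInstance.maxHeartbeats 1000000
set_option maxHeartbeats 2000000

section AuxLL
variable {n : ℕ} {r : Fin n → ℂ}

lemma lam_sq (n : ℕ) (r : Fin n → ℂ) [NeZero n] (i : Fin n) :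
    lamQ n r i ^ 2 = lambar n r - algebraMap ℂ (LLQ n r) (r i) := by
  have halg : ∀ z : ℂ, algebraMap ℂ (LLQ n r) z = Ideal.Quotient.mk _ (C z) := fun z => rfl
  have h : (Ideal.Quotient.mk (LLIdeal n r)) (X i ^ 2 + C (r i))
      = (Ideal.Quotient.mk (LLIdeal n r)) (X (0 : Fin n) ^ 2 + C (r 0)) := by
    rw [Ideal.Quotient.eq]
    apply Ideal.subset_span
    exact ⟨i, 0, by ring⟩
  unfold lambar lamQ
  rw [halg, halg, eq_sub_iff_add_eq, ← map_pow, ← map_pow, ← map_add, ← map_add, h]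

lemma Qeven_diag (n : ℕ) (r : Fin n → ℂ) [NeZero n] (k : ℕ) (i : Fin n) :
    Qeven n r k i i = 0 := by rw [Qeven, sub_self, smul_zero]

lemma brk_smul (c d : LLQ n r) (A B : LLM n r) :
    ⁅c • A, d • B⁆ = (c * d) • (A * B - B * A) := by
  rw [Ring.lie_def]
  ext x y
  simp only [Matrix.sub_apply, Matrix.smul_apply, Matrix.mul_apply, smul_eq_mul,
    Finset.mul_sum, mul_sub]
  rw [← Finset.sum_sub_distrib, ← Finset.sum_sub_distrib]
  apply Finset.sum_congr rfl
  intro k _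
  ring

lemma csmul (z : ℂ) (s : LLQ n r) (M : LLM n r) :
    z • (s • M) = (algebraMap ℂ (LLQ n r) z * s) • M := by
  ext x y
  simp only [Matrix.smul_apply, smul_eq_mul, mul_assoc]
  exact Algebra.smul_def z (s * M x y)

lemma sub_smul' (x y : LLQ n r) (M : LLM n r) : (x - y) • M = x • M - y • M := by
  ext a b
  simp only [Matrix.smul_apply, Matrix.sub_apply, smul_eq_mul, sub_mul]

lemma neg_smul' (x : LLQ n r) (M : LLM n r) : (-x) • M = -(x • M) := by
  ext a b
  simp only [Matrix.smul_apply, Matrix.neg_apply, smul_eq_mul]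
  ring


lemma Emul (i j a b : Fin n) :
    Matrix.single i.castSucc j.castSucc (1 : LLQ n r) * Matrix.single a.castSucc b.castSucc 1
      = if j = a then Matrix.single i.castSucc b.castSucc 1 else 0 := by
  split_ifs with h
  · subst h; rw [Matrix.single_mul_single_same, one_mul]
  · exact Matrix.single_mul_single_of_ne _ _ _ _ (fun hc => h (Fin.castSucc_inj.mp hc)) _


lemma add_smul' (x y : LLQ n r) (M : LLM n r) : (x + y) • M = x • M + y • M := by
  ext a b
  simp only [Matrix.smul_apply, Matrix.add_apply, smul_eq_mul, add_mul]

lemma smul_congr (x y : LLQ n r) (M : LLM n r) (h : x = y) : x • M = y • M := by rw [h]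

lemma smul_sub_rev (x : LLQ n r) (A B : LLM n r) : x • (A - B) = (-x) • (B - A) := by
  ext a b
  simp only [Matrix.smul_apply, Matrix.sub_apply, smul_eq_mul]
  ring

lemma brk_anti (X Y : LLM n r) : (X - Y) * (Y - X) - (Y - X) * (X - Y) = 0 := by
  rw [sub_mul, sub_mul, mul_sub, mul_sub, mul_sub, mul_sub]
  abel

lemma pair_eq (s : LLQ n r) (x y : Fin (n+1)) :
    -Matrix.single x y s + Matrix.single y x s
      = s • (Matrix.single y x (1 : LLQ n r) - Matrix.single x y 1) := by
  ext u v
  simp only [Matrix.add_apply, Matrix.neg_apply, Matrix.smul_apply, Matrix.sub_apply,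
    Matrix.single, Matrix.of_apply, smul_eq_mul]
  split_ifs <;> ring

end AuxLL

theorem stmt_4 (n : ℕ) [NeZero n] (hn : 3 ≤ n) (r : Fin n → ℂ) (hr : Function.Injective r) :
    ∀ (i j a b : Fin n) (k₁ k₂ : ℕ), i ≠ j → a ≠ b → 1 ≤ k₁ → 1 ≤ k₂ →
      ⁅Qeven n r k₁ i j, Qeven n r k₂ a b⁆
        = kdelta a j • Qeven n r (k₁ + k₂) i b
          - kdelta i b • Qeven n r (k₁ + k₂) a j
          + kdelta j b • Qeven n r (k₁ + k₂) a i
          - kdelta i a • Qeven n r (k₁ + k₂) j b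
          + (r i * kdelta i b) • Qeven n r (k₁ + k₂ - 1) a j
          - (r j * kdelta a j) • Qeven n r (k₁ + k₂ - 1) i b
          + (r i * kdelta i a) • Qeven n r (k₁ + k₂ - 1) j b
          - (r j * kdelta j b) • Qeven n r (k₁ + k₂ - 1) a i := by
  intro i j a b k₁ k₂ hij hab hk₁ hk₂
  obtain ⟨p, rfl⟩ : ∃ p, k₁ = p + 1 := ⟨k₁ - 1, by omega⟩
  obtain ⟨q, rfl⟩ : ∃ q, k₂ = q + 1 := ⟨k₂ - 1, by omega⟩
  simp only [Qeven, kdelta, brk_smul,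
    show p + 1 - 1 = p from rfl, show q + 1 - 1 = q from rfl,
    show p + 1 + (q + 1) - 1 = p + q + 1 from by omega,
    show p + 1 + (q + 1) - 1 - 1 = p + q from by omega,
    show p + q + 1 - 1 = p + q from rfl]
  by_cases haj : a = j
  · subst haj
    by_cases hib : i = b
    · -- Case A : a = j, b = i
      subst hib
      rw [brk_anti, smul_zero]
      simp [hij, Ne.symm hij]
    · -- Case B : a = j, i ≠ b
      simp [hib, hab, hij, Ne.symm hib, Ne.symm hab, Ne.symm hij, Emul, sub_mul, mul_sub]
      rw [csmul, ← sub_smul']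
      apply smul_congr
      linear_combination (lambar n r ^ (p + q) * lamQ n r i * lamQ n r b) * lam_sq n r a
  · by_cases hib : i = b
    · -- Case C : i = b, a ≠ j
      subst hib
      simp [haj, hab, hij, Ne.symm haj, Ne.symm hab, Ne.symm hij, Emul, sub_mul, mul_sub]
      rw [csmul, ← neg_smul', ← add_smul', smul_sub_rev]
      apply smul_congr
      linear_combination (-(lambar n r ^ (p + q) * lamQ n r a * lamQ n r j)) * lam_sq n r i
    · by_cases hjb : j = b
      · by_cases hia : i = a
        · -- Case D : i = a, j = b
          subst hjb
          subst hia
          rw [sub_self, smul_zero]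
          simp [hij, Ne.symm hij]
        · -- Case E : j = b only
          subst hjb
          simp [haj, hab, hij, hia, hib, Ne.symm haj, Ne.symm hab, Ne.symm hij, Ne.symm hia,
            Ne.symm hib, Emul, sub_mul, mul_sub]
          rw [csmul, ← sub_smul', pair_eq]
          apply smul_congr
          linear_combination (lambar n r ^ (p + q) * lamQ n r a * lamQ n r i) * lam_sq n r j
      · by_cases hia : i = a
        · -- Case F : i = a only
          subst hia
          simp [haj, hab, hij, hjb, hib, Ne.symm haj, Ne.symm hab, Ne.symm hij, Ne.symm hjb,
            Ne.symm hib, Emul, sub_mul, mul_sub]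
          rw [csmul, ← neg_smul', ← add_smul', smul_sub_rev, pair_eq]
          apply smul_congr
          linear_combination (lambar n r ^ (p + q) * lamQ n r j * lamQ n r b) * lam_sq n r i
        · -- Case G : all distinct
          simp [haj, hab, hij, hjb, hia, hib, Ne.symm haj, Ne.symm hab, Ne.symm hij, Ne.symm hjb,
            Ne.symm hia, Ne.symm hib, Emul, sub_mul, mul_sub]
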